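/- Let n ≥ 2 and let k, μ : ℝ^n → ℝ satisfy k(x) ≥ c₀ > 0 and μ(x) ≥ c₀ > 0 for all x. Define λ := k − 2μ/n and the tensor C^{1/2}_{ijlm} := λ δ_{ij}δ_{lm} + μ(δ_{il}δ_{jm} + δ_{im}δ_{jl}). Then for all x, y ∈ ℝ^n and all vectors v, w ∈ ℝ^n: C^{1/2}_{ijαβ}(x) C^{1/2}_{αβlm}(y) v_i w_j v_l w_m = (n k(x)k(y) + (2(n−2)/n) μ(x)μ(y)) (v·w)² + 2μ(x)μ(y) |v|²|w|², and hence this quantity is ≥ 2c₀² |v|²|w|². -/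
import Mathlib


/-- Kronecker delta. -/
def kron {n : ℕ} (i j : Fin n) : ℝ := if i = j then 1 else 0

/-- The isotropic fourth order tensor with Lamé-type parameters `lam, mu`. -/
def isoTensor (n : ℕ) (lam mu : ℝ) (i j l m : Fin n) : ℝ :=
  lam * kron i j * kron l m + mu * (kron i l * kron j m + kron i m * kron j l)

lemma contract (n : ℕ) (l1 m1 l2 m2 : ℝ) (i j l m : Fin n) :
    ∑ α, ∑ β, isoTensor n l1 m1 i j α β * isoTensor n l2 m2 α β l m
    = ((n : ℝ) * l1 * l2 + 2 * l1 * m2 + 2 * m1 * l2) * kron i j * kron l m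
      + 2 * m1 * m2 * (kron i l * kron j m + kron i m * kron j l) := by
  have key : ∀ s : Prop, ∀ _ : Decidable s, ∀ a : ℝ,
      (∑ _x : Fin n, if s then a else 0) = if s then (n : ℝ) * a else 0 := by
    intro s _ a
    split <;> simp [Finset.sum_const, mul_comm]
  simp only [isoTensor, kron, mul_ite, ite_mul, mul_one, mul_zero, one_mul, zero_mul,
    add_mul, mul_add, Finset.sum_add_distrib, Finset.sum_ite_eq, Finset.sum_ite_eq',
    Finset.mem_univ, if_true, zero_add, add_zero]
  by_cases hlm : l = m <;>
  simp only [hlm, if_true, if_false, Finset.sum_add_distrib, Finset.sum_ite_eq,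
    Finset.sum_ite_eq', Finset.mem_univ, if_true, key, Finset.sum_const,
    Finset.card_univ, Fintype.card_fin, nsmul_eq_mul, ite_self, Finset.sum_const_zero] <;>
  split_ifs <;> simp_all <;> ring

lemma quad (n : ℕ) (A B : ℝ) (v w : Fin n → ℝ) :
    ∑ i, ∑ j, ∑ l, ∑ m,
      (A * kron i j * kron l m + B * (kron i l * kron j m + kron i m * kron j l))
        * v i * w j * v l * w m
    = A * (∑ i, v i * w i) ^ 2
      + B * ((∑ i, v i ^ 2) * (∑ i, w i ^ 2) + (∑ i, v i * w i) ^ 2) := by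
  have pull : ∀ (p : Prop) (_ : Decidable p) (f : Fin n → ℝ),
      (∑ x2, if p then f x2 else 0) = if p then ∑ x2, f x2 else 0 := by
    intro p _ f; split <;> simp
  simp only [kron, pull, mul_ite, ite_mul, mul_one, mul_zero, one_mul, zero_mul,
    add_mul, mul_add, Finset.sum_add_distrib, Finset.sum_ite_eq, Finset.sum_ite_eq',
    Finset.mem_univ, if_true, zero_add, add_zero]
  have e1 : (∑ i, v i * w i) ^ 2 = ∑ i, ∑ j, (v i * w i) * (v j * w j) := by
    rw [sq, Finset.sum_mul_sum]
  have e2 : (∑ i, v i ^ 2) * (∑ i, w i ^ 2) = ∑ i, ∑ j, v i ^ 2 * w j ^ 2 :=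
    Finset.sum_mul_sum _ _ _ _
  rw [e1, e2]
  simp only [Finset.mul_sum, ← Finset.sum_add_distrib]
  exact Finset.sum_congr rfl fun i _ => Finset.sum_congr rfl fun j _ => by ring

/-- positivity estimate for the two-point isotropic tensor.
With `λ := k − 2μ/n` and `k, μ ≥ c₀ > 0`, for all `x, y` and vectors `v, w`:
`C^{1/2}(x) : C^{1/2}(y)` contracted four times with `v, w, v, w` equals
`(n k(x)k(y) + (2(n−2)/n) μ(x)μ(y)) (v·w)² + 2μ(x)μ(y)|v|²|w|² ≥ 2c₀²|v|²|w|²`. -/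
theorem isoTensor_positivity (n : ℕ) (hn : 2 ≤ n) (c₀ : ℝ) (hc₀ : 0 < c₀)
    (k μ : (Fin n → ℝ) → ℝ) (hk : ∀ x, c₀ ≤ k x) (hμ : ∀ x, c₀ ≤ μ x)
    (x y : Fin n → ℝ) (v w : Fin n → ℝ) :
    (∑ i, ∑ j, ∑ l, ∑ m,
        (∑ α, ∑ β,
          isoTensor n (k x - 2 * μ x / n) (μ x) i j α β *
            isoTensor n (k y - 2 * μ y / n) (μ y) α β l m)
          * v i * w j * v l * w m
      = ((n : ℝ) * k x * k y + (2 * ((n : ℝ) - 2) / n) * μ x * μ y)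
          * (∑ i, v i * w i) ^ 2
        + 2 * μ x * μ y * (∑ i, v i ^ 2) * (∑ i, w i ^ 2)) ∧
    2 * c₀ ^ 2 * (∑ i, v i ^ 2) * (∑ i, w i ^ 2)
      ≤ ∑ i, ∑ j, ∑ l, ∑ m,
          (∑ α, ∑ β,
            isoTensor n (k x - 2 * μ x / n) (μ x) i j α β *
              isoTensor n (k y - 2 * μ y / n) (μ y) α β l m)
            * v i * w j * v l * w m := by
  have hn0' : (0:ℝ) < n := by
    have : 0 < n := by omega
    exact_mod_cast this
  have hn0 : (n : ℝ) ≠ 0 := ne_of_gt hn0'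
  set l1 := k x - 2 * μ x / n with hl1
  set l2 := k y - 2 * μ y / n with hl2
  set A := (n : ℝ) * l1 * l2 + 2 * l1 * (μ y) + 2 * (μ x) * l2 with hA
  set B := 2 * μ x * μ y with hB
  have heq : ∑ i, ∑ j, ∑ l, ∑ m,
        (∑ α, ∑ β, isoTensor n l1 (μ x) i j α β * isoTensor n l2 (μ y) α β l m)
          * v i * w j * v l * w m
      = ((n : ℝ) * k x * k y + (2 * ((n : ℝ) - 2) / n) * μ x * μ y)
          * (∑ i, v i * w i) ^ 2
        + 2 * μ x * μ y * (∑ i, v i ^ 2) * (∑ i, w i ^ 2) := by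
    have h1 : ∑ i, ∑ j, ∑ l, ∑ m,
        (∑ α, ∑ β, isoTensor n l1 (μ x) i j α β * isoTensor n l2 (μ y) α β l m)
          * v i * w j * v l * w m
        = ∑ i, ∑ j, ∑ l, ∑ m,
          (A * kron i j * kron l m + B * (kron i l * kron j m + kron i m * kron j l))
            * v i * w j * v l * w m := by
      refine Finset.sum_congr rfl fun i _ => Finset.sum_congr rfl fun j _ =>
        Finset.sum_congr rfl fun l _ => Finset.sum_congr rfl fun m _ => ?_
      rw [contract]
    rw [h1, quad, hA, hB, hl1, hl2]
    field_simp
    ring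
  constructor
  · exact heq
  · rw [heq]
    have hV : (0:ℝ) ≤ ∑ i, v i ^ 2 := Finset.sum_nonneg fun i _ => sq_nonneg _
    have hW : (0:ℝ) ≤ ∑ i, w i ^ 2 := Finset.sum_nonneg fun i _ => sq_nonneg _
    have hkk : c₀ ^ 2 ≤ k x * k y := by nlinarith [hk x, hk y]
    have hμμ : c₀ ^ 2 ≤ μ x * μ y := by nlinarith [hμ x, hμ y]
    have hn2 : (2:ℝ) ≤ n := by exact_mod_cast hn
    have hcoef : 0 ≤ (n : ℝ) * k x * k y + (2 * ((n : ℝ) - 2) / n) * μ x * μ y := by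
      have h2 : (0:ℝ) ≤ (n:ℝ) - 2 := by linarith
      have : 0 ≤ 2 * ((n : ℝ) - 2) / n := by positivity
      nlinarith
    nlinarith [sq_nonneg (∑ i, v i * w i), mul_nonneg hV hW,
      mul_nonneg hcoef (sq_nonneg (∑ i, v i * w i)),
      mul_le_mul_of_nonneg_right hμμ (mul_nonneg hV hW)]
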